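/- Let Y(θ) be a zero-mean Gaussian process on a compact parameter space Θ ⊂ ℝ^q with covariance K_θ(θ,θ') = κ exp(-Σ_i φ_i|θ_i - θ'_i|) (no nugget, κ > 0, φ_i > 0), conditioned on values at design points θ₁,…,θ_p. Then the conditional (kriging) variance at any θ*, namely κ - Σ_{θ*θ} Σ_θ⁻¹ Σ_{θ*θ}ᵀ, satisfies: it is zero whenever θ* equals a design point, and it is bounded above by 2κ(1 - exp(-Σ_i φ_i |θ* - θ_{j}|_i)) ≤ 2κ Σ_i φ_i ‖θ* - θ_j‖_∞ for the nearest design point θ_j, hence it converges to 0 uniformly on Θ as the fill distance of the design points tends to zero. -/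

import Mathlib

open Matrix Finset

/-- The exponential covariance function `K(θ,θ') = κ exp(-∑ᵢ φᵢ|θᵢ - θ'ᵢ|)` (no nugget). -/
noncomputable def expKernel (q : ℕ) (κ : ℝ) (φ : Fin q → ℝ) (x y : Fin q → ℝ) : ℝ :=
  κ * Real.exp (-(∑ i, φ i * |x i - y i|))

/-- The kriging (conditional) variance `κ - Σ_{θ*θ} Σ_θ⁻¹ Σ_{θ*θ}ᵀ` of the zero-mean
Gaussian process with covariance `expKernel` at the point `θs`, given values at the
design points `θd`. -/
noncomputable def krigVar (q : ℕ) (κ : ℝ) (φ : Fin q → ℝ) {p : ℕ}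
    (θd : Fin p → Fin q → ℝ) (θs : Fin q → ℝ) : ℝ :=
  κ - (fun a => expKernel q κ φ θs (θd a)) ⬝ᵥ
    ((Matrix.of fun a b => expKernel q κ φ (θd a) (θd b))⁻¹ *ᵥ
      fun a => expKernel q κ φ θs (θd a))

/-- Predecessor of `w` in `F ∪ {0}`. -/
noncomputable def predF (F : Finset ℝ) (w : ℝ) : ℝ :=
  ((insert (0:ℝ) (F.filter (· < w))).max' (insert_nonempty _ _))

lemma predF_lt {F : Finset ℝ} {w : ℝ} (hw : 0 < w) : predF F w < w := by
  have h := Finset.max'_mem (insert (0:ℝ) (F.filter (· < w))) (insert_nonempty _ _)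
  rcases Finset.mem_insert.1 h with h | h
  · rw [predF, h]; exact hw
  · exact (Finset.mem_filter.1 h).2

lemma le_predF {F : Finset ℝ} {w x : ℝ} (hx : x ∈ F) (hxw : x < w) : x ≤ predF F w := by
  apply Finset.le_max'
  apply Finset.mem_insert_of_mem
  rw [Finset.mem_filter]
  exact ⟨hx, hxw⟩

lemma predF_nonneg (F : Finset ℝ) (w : ℝ) : 0 ≤ predF F w :=
  Finset.le_max' _ _ (Finset.mem_insert_self _ _)

lemma telescope (F : Finset ℝ) (hF : ∀ x ∈ F, 0 < x) :
    ∀ n : ℕ, ∀ m ∈ F, (F.filter (· ≤ m)).card ≤ n →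
      ∑ w ∈ F.filter (· ≤ m), (w - predF F w) = m := by
  intro n
  induction n with
  | zero =>
    intro m hm hc
    exact absurd (Finset.card_eq_zero.1 (Nat.le_zero.1 hc))
      (Finset.nonempty_iff_ne_empty.1 ⟨m, Finset.mem_filter.2 ⟨hm, le_refl m⟩⟩)
  | succ n ih =>
    intro m hm hc
    have hm0 : 0 < m := hF m hm
    have hpred : predF F m < m := predF_lt hm0
    have hsplit : F.filter (· ≤ m) = insert m (F.filter (· ≤ predF F m)) := by
      ext x
      simp only [Finset.mem_insert, Finset.mem_filter]
      constructor
      · rintro ⟨hxF, hxm⟩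
        rcases eq_or_lt_of_le hxm with h | h
        · exact Or.inl h
        · exact Or.inr ⟨hxF, le_predF hxF h⟩
      · rintro (rfl | ⟨hxF, hx⟩)
        · exact ⟨hm, le_refl _⟩
        · exact ⟨hxF, hx.trans hpred.le⟩
    have hmnot : m ∉ F.filter (· ≤ predF F m) := by
      simp only [Finset.mem_filter]
      rintro ⟨-, h⟩; exact absurd (h.trans_lt hpred) (lt_irrefl m)
    rw [hsplit, Finset.sum_insert hmnot]
    have hcard : (F.filter (· ≤ predF F m)).card ≤ n := by
      have : (F.filter (· ≤ predF F m)).card < (F.filter (· ≤ m)).card := by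
        apply Finset.card_lt_card
        rw [hsplit]
        exact ⟨Finset.subset_insert _ _, fun hsub => hmnot (hsub (Finset.mem_insert_self _ _))⟩
      omega
    -- case on whether predF F m ∈ F or predF F m = 0
    have h := Finset.max'_mem (insert (0:ℝ) (F.filter (· < m))) (insert_nonempty _ _)
    rcases Finset.mem_insert.1 h with h0 | hmem
    · have h0 : predF F m = 0 := h0
      have : F.filter (· ≤ predF F m) = ∅ := by
        rw [Finset.filter_eq_empty_iff]
        intro x hx
        rw [h0]
        exact not_le.2 (hF x hx)
      rw [this, Finset.sum_empty, h0]; ring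
    · have hpF : predF F m ∈ F := (Finset.mem_filter.1 hmem).1
      rw [ih (predF F m) hpF hcard]; ring

lemma min_eq_sum {F : Finset ℝ} (hF : ∀ x ∈ F, 0 < x) {s t : ℝ}
    (hs : s ∈ F) (ht : t ∈ F) :
    min s t = ∑ w ∈ F, (w - predF F w) *
      ((if w ≤ s then (1:ℝ) else 0) * (if w ≤ t then (1:ℝ) else 0)) := by
  have hmin : min s t ∈ F := by
    rcases min_choice s t with h | h <;> rw [h] <;> assumption
  have : ∀ w : ℝ, (if w ≤ s then (1:ℝ) else 0) * (if w ≤ t then (1:ℝ) else 0)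
      = if w ≤ min s t then (1:ℝ) else 0 := by
    intro w
    by_cases h1 : w ≤ s <;> by_cases h2 : w ≤ t <;>
      simp [h1, h2, le_min_iff]
  simp only [this, mul_ite, mul_one, mul_zero, Finset.sum_ite, Finset.sum_const_zero, add_zero]
  exact (telescope F hF (F.filter (· ≤ min s t)).card (min s t) hmin (le_refl _)).symm

/-- Strict positivity of the multidimensional min-product kernel. -/
lemma minprod_pos {p q : ℕ} (v : Fin p → Fin q → ℝ) (hv : ∀ a i, 0 < v a i)
    (hinj : Function.Injective v) (d : Fin p → ℝ) (hd : d ≠ 0) :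
    0 < ∑ a, ∑ b, d a * d b * ∏ i, min (v a i) (v b i) := by
  classical
  set F : Fin q → Finset ℝ := fun i => Finset.image (fun a => v a i) Finset.univ with hFdef
  have hFpos : ∀ i, ∀ x ∈ F i, 0 < x := by
    intro i x hx
    rcases Finset.mem_image.1 hx with ⟨a, -, rfl⟩
    exact hv a i
  have hmemF : ∀ a i, v a i ∈ F i := fun a i =>
    Finset.mem_image.2 ⟨a, Finset.mem_univ a, rfl⟩
  set χ : Fin p → (Fin q → ℝ) → ℝ :=
    fun a w => ∏ i, (if w i ≤ v a i then (1:ℝ) else 0) with hχdef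
  set G : (Fin q → ℝ) → ℝ := fun w => ∏ i, (w i - predF (F i) (w i)) with hGdef
  have hGpos : ∀ w ∈ Fintype.piFinset F, 0 < G w := by
    intro w hw
    apply Finset.prod_pos
    intro i _
    have hwi : w i ∈ F i := Fintype.mem_piFinset.1 hw i
    exact sub_pos.2 (predF_lt (hFpos i _ hwi))
  -- expansion of the product of mins
  have hexp : ∀ a b, (∏ i, min (v a i) (v b i))
      = ∑ w ∈ Fintype.piFinset F, G w * (χ a w * χ b w) := by
    intro a b
    have : ∀ i, min (v a i) (v b i) = ∑ x ∈ F i,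
        (x - predF (F i) x) *
          ((if x ≤ v a i then (1:ℝ) else 0) * (if x ≤ v b i then (1:ℝ) else 0)) :=
      fun i => min_eq_sum (hFpos i) (hmemF a i) (hmemF b i)
    rw [Finset.prod_congr rfl (fun i _ => this i), Finset.prod_univ_sum]
    apply Finset.sum_congr rfl
    intro w _
    rw [hGdef, hχdef]
    simp only
    rw [← Finset.prod_mul_distrib, ← Finset.prod_mul_distrib]
  -- rewrite total sum as sum of weighted squares
  have htotal : (∑ a, ∑ b, d a * d b * ∏ i, min (v a i) (v b i))
      = ∑ w ∈ Fintype.piFinset F, G w * (∑ a, d a * χ a w)^2 := by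
    calc (∑ a, ∑ b, d a * d b * ∏ i, min (v a i) (v b i))
        = ∑ a, ∑ b, ∑ w ∈ Fintype.piFinset F,
            G w * ((d a * χ a w) * (d b * χ b w)) := by
          apply Finset.sum_congr rfl; intro a _
          apply Finset.sum_congr rfl; intro b _
          rw [hexp a b, Finset.mul_sum]
          apply Finset.sum_congr rfl; intro w _
          ring
      _ = ∑ a, ∑ w ∈ Fintype.piFinset F, ∑ b,
            G w * ((d a * χ a w) * (d b * χ b w)) :=
          Finset.sum_congr rfl (fun a _ => Finset.sum_comm)
      _ = ∑ w ∈ Fintype.piFinset F, ∑ a, ∑ b,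
            G w * ((d a * χ a w) * (d b * χ b w)) := Finset.sum_comm
      _ = ∑ w ∈ Fintype.piFinset F, G w * (∑ a, d a * χ a w)^2 := by
          apply Finset.sum_congr rfl; intro w _
          rw [sq, Finset.sum_mul_sum]
          simp only [Finset.mul_sum]
  rw [htotal]
  have hsupp : {a : Fin p | d a ≠ 0}.Nonempty := by
    rw [Set.nonempty_iff_ne_empty]
    intro h
    apply hd
    funext a
    by_contra ha
    have : a ∈ {a : Fin p | d a ≠ 0} := ha
    rw [h] at this
    exact this
  obtain ⟨a0, ha0, hmax⟩ :=
    Set.Finite.exists_maximalFor v {a : Fin p | d a ≠ 0} (Set.toFinite _) hsupp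
  have ha0' : d a0 ≠ 0 := ha0
  have hw0 : v a0 ∈ Fintype.piFinset F := Fintype.mem_piFinset.2 (fun i => hmemF a0 i)
  have hχa0 : χ a0 (v a0) = 1 := by
    rw [hχdef]
    simp
  have hsum : (∑ a, d a * χ a (v a0)) = d a0 := by
    rw [Finset.sum_eq_single a0]
    · rw [hχa0, mul_one]
    · intro b _ hb
      by_cases hdb : d b = 0
      · rw [hdb, zero_mul]
      · by_cases hle : ∀ i, v a0 i ≤ v b i
        · exfalso
          exact hb (hinj (le_antisymm (hmax hdb (Pi.le_def.2 hle)) (Pi.le_def.2 hle)))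
        · push_neg at hle
          obtain ⟨i, hi⟩ := hle
          have : χ b (v a0) = 0 := by
            rw [hχdef]
            exact Finset.prod_eq_zero (Finset.mem_univ i) (if_neg (not_le.2 hi))
          rw [this, mul_zero]
    · intro h
      exact absurd (Finset.mem_univ a0) h
  apply Finset.sum_pos'
  · intro w hw
    exact mul_nonneg (hGpos w hw).le (sq_nonneg _)
  · exact ⟨v a0, hw0, mul_pos (hGpos _ hw0) (by rw [hsum]; exact sq_pos_of_ne_zero ha0')⟩

lemma expKernel_quadform_pos {q : ℕ} {κ : ℝ} {φ : Fin q → ℝ} (hκ : 0 < κ)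
    (hφ : ∀ i, 0 < φ i) {p : ℕ} {θd : Fin p → Fin q → ℝ}
    (hinj : Function.Injective θd) (c : Fin p → ℝ) (hc : c ≠ 0) :
    0 < ∑ a, ∑ b, c a * c b * expKernel q κ φ (θd a) (θd b) := by
  classical
  set v : Fin p → Fin q → ℝ := fun a i => Real.exp (2 * (φ i * θd a i)) with hvdef
  set d : Fin p → ℝ := fun a => c a * Real.exp (-(∑ i, φ i * θd a i)) with hddef
  have hvpos : ∀ a i, 0 < v a i := fun a i => Real.exp_pos _
  have hvinj : Function.Injective v := by
    intro a b hab
    apply hinj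
    funext i
    have := congrFun hab i
    simp only [hvdef] at this
    have h2 := Real.exp_injective this
    have h3 := mul_left_cancel₀ (two_ne_zero) h2
    exact mul_left_cancel₀ (hφ i).ne' h3
  have hdne : d ≠ 0 := by
    intro h
    apply hc
    funext a
    have := congrFun h a
    simp only [hddef, Pi.zero_apply] at this
    rcases mul_eq_zero.1 this with h' | h'
    · exact h'
    · exact absurd h' (Real.exp_ne_zero _)
  have habs : ∀ s t : ℝ, -s + -t + 2 * min s t = -|s - t| := by
    intro s t
    rcases le_total s t with h | h
    · rw [min_eq_left h, abs_of_nonpos (by linarith)]; ring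
    · rw [min_eq_right h, abs_of_nonneg (by linarith)]; ring
  have key : ∀ a b, c a * c b * expKernel q κ φ (θd a) (θd b)
      = κ * (d a * d b * ∏ i, min (v a i) (v b i)) := by
    intro a b
    have h1 : (∏ i, min (v a i) (v b i))
        = Real.exp (∑ i, 2 * min (φ i * θd a i) (φ i * θd b i)) := by
      rw [Real.exp_sum]
      apply Finset.prod_congr rfl
      intro i _
      rw [hvdef]
      have : Real.exp (2 * min (φ i * θd a i) (φ i * θd b i))
          = min (Real.exp (2 * (φ i * θd a i))) (Real.exp (2 * (φ i * θd b i))) := by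
        rw [← Real.exp_monotone.map_min, mul_min_of_nonneg _ _ (by norm_num : (0:ℝ) ≤ 2)]
      rw [this]
    have h2 : d a * d b * ∏ i, min (v a i) (v b i)
        = c a * c b * Real.exp ((-(∑ i, φ i * θd a i)) + (-(∑ i, φ i * θd b i))
            + ∑ i, 2 * min (φ i * θd a i) (φ i * θd b i)) := by
      rw [h1, hddef, Real.exp_add, Real.exp_add]
      ring
    have h3 : (-(∑ i, φ i * θd a i)) + (-(∑ i, φ i * θd b i))
        + (∑ i, 2 * min (φ i * θd a i) (φ i * θd b i))
        = -(∑ i, φ i * |θd a i - θd b i|) := by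
      rw [← Finset.sum_neg_distrib, ← Finset.sum_neg_distrib, ← Finset.sum_add_distrib,
        ← Finset.sum_add_distrib, ← Finset.sum_neg_distrib]
      apply Finset.sum_congr rfl
      intro i _
      rw [habs]
      congr 1
      rw [← mul_sub, abs_mul, abs_of_pos (hφ i)]
    rw [h2, h3, expKernel]
    ring
  calc (0:ℝ) < κ * ∑ a, ∑ b, d a * d b * ∏ i, min (v a i) (v b i) :=
        mul_pos hκ (minprod_pos v hvpos hvinj d hdne)
    _ = ∑ a, ∑ b, c a * c b * expKernel q κ φ (θd a) (θd b) := by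
        rw [Finset.mul_sum]
        apply Finset.sum_congr rfl
        intro a _
        rw [Finset.mul_sum]
        apply Finset.sum_congr rfl
        intro b _
        rw [key a b]

section Krig
variable {q : ℕ} {κ : ℝ} {φ : Fin q → ℝ} {p : ℕ} {θd : Fin p → Fin q → ℝ}

lemma expKernel_symm (x y : Fin q → ℝ) :
    expKernel q κ φ x y = expKernel q κ φ y x := by
  unfold expKernel
  congr 2
  apply congrArg
  apply Finset.sum_congr rfl
  intro i _
  rw [abs_sub_comm]

lemma expKernel_self (hκ : 0 < κ) (x : Fin q → ℝ) : expKernel q κ φ x x = κ := by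
  simp [expKernel]

lemma expKernel_matrix_posDef (hκ : 0 < κ) (hφ : ∀ i, 0 < φ i)
    (hinj : Function.Injective θd) :
    (Matrix.of fun a b => expKernel q κ φ (θd a) (θd b)).PosDef := by
  refine Matrix.PosDef.of_dotProduct_mulVec_pos ?_ ?_
  · ext a b
    simp only [conjTranspose_apply, of_apply, star_trivial]
    exact expKernel_symm _ _
  · intro x hx
    have h := expKernel_quadform_pos hκ hφ hinj x hx
    have : star x ⬝ᵥ ((Matrix.of fun a b => expKernel q κ φ (θd a) (θd b)) *ᵥ x)
        = ∑ a, ∑ b, x a * x b * expKernel q κ φ (θd a) (θd b) := by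
      simp only [star_trivial, dotProduct, mulVec, of_apply, Finset.mul_sum]
      apply Finset.sum_congr rfl
      intro a _
      apply Finset.sum_congr rfl
      intro b _
      ring
    rw [this]
    exact h

lemma krigVar_design (hκ : 0 < κ) (hφ : ∀ i, 0 < φ i)
    (hinj : Function.Injective θd) (j0 : Fin p) :
    krigVar q κ φ θd (θd j0) = 0 := by
  classical
  set M : Matrix (Fin p) (Fin p) ℝ :=
    Matrix.of fun a b => expKernel q κ φ (θd a) (θd b) with hMdef
  have hM := expKernel_matrix_posDef (θd := θd) hκ hφ hinj
  have hdet : IsUnit M.det := hM.det_pos.ne'.isUnit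
  have hk : (fun a => expKernel q κ φ (θd j0) (θd a)) = M *ᵥ Pi.single j0 1 := by
    funext a
    rw [Matrix.mulVec_single]
    simp only [hMdef, Pi.smul_apply, MulOpposite.op_one, one_smul, Matrix.col_apply, of_apply, mul_one]
    exact expKernel_symm _ _
  rw [krigVar, hk, Matrix.mulVec_mulVec, Matrix.nonsing_inv_mul _ hdet, Matrix.one_mulVec]
  rw [dotProduct_single]
  rw [Matrix.mulVec_single]
  simp only [hMdef, Pi.smul_apply, MulOpposite.op_one, one_smul, Matrix.col_apply, of_apply, mul_one]
  rw [expKernel_self hκ]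
  ring

lemma krigVar_bound (hκ : 0 < κ) (hφ : ∀ i, 0 < φ i)
    (hinj : Function.Injective θd) (θs : Fin q → ℝ) (j : Fin p) :
    krigVar q κ φ θd θs
      ≤ 2 * κ * (1 - Real.exp (-(∑ i, φ i * |θs i - θd j i|))) := by
  classical
  set M : Matrix (Fin p) (Fin p) ℝ :=
    Matrix.of fun a b => expKernel q κ φ (θd a) (θd b) with hMdef
  set k : Fin p → ℝ := fun a => expKernel q κ φ θs (θd a) with hkdef
  have hM := expKernel_matrix_posDef (θd := θd) hκ hφ hinj
  have hdet : IsUnit M.det := hM.det_pos.ne'.isUnit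
  set u : Fin p → ℝ := M⁻¹ *ᵥ k with hudef
  set e : Fin p → ℝ := Pi.single j 1 with hedef
  have hMu : M *ᵥ u = k := by
    rw [hudef, Matrix.mulVec_mulVec, Matrix.mul_nonsing_inv _ hdet, Matrix.one_mulVec]
  have hcolj : ∀ w : Fin p → ℝ, w ⬝ᵥ (M *ᵥ e) = (M *ᵥ w) j := by
    intro w
    rw [hedef, Matrix.mulVec_single]
    simp only [dotProduct, Matrix.mulVec, Pi.smul_apply, MulOpposite.op_one, one_smul, Matrix.col_apply, dotProduct, mul_one]
    apply Finset.sum_congr rfl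
    intro a _
    simp only [hMdef, of_apply]
    rw [expKernel_symm (θd a) (θd j)]
    ring
  have hquad : 0 ≤ (u - e) ⬝ᵥ (M *ᵥ (u - e)) := by
    have := hM.posSemidef.dotProduct_mulVec_nonneg (u - e)
    simpa using this
  have hexpand : (u - e) ⬝ᵥ (M *ᵥ (u - e))
      = k ⬝ᵥ u - 2 * k j + κ := by
    rw [Matrix.mulVec_sub, sub_dotProduct, dotProduct_sub,
      dotProduct_sub, hMu]
    have h1 : u ⬝ᵥ (M *ᵥ e) = k j := by rw [hcolj, hMu]
    have h2 : e ⬝ᵥ k = k j := by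
      rw [hedef, single_dotProduct, one_mul]
    have h3 : e ⬝ᵥ (M *ᵥ e) = κ := by
      rw [hcolj]
      rw [hedef, Matrix.mulVec_single]
      simp only [hMdef, Pi.smul_apply, MulOpposite.op_one, one_smul, Matrix.col_apply, of_apply, mul_one]
      exact expKernel_self hκ _
    rw [h1, h2, h3, dotProduct_comm u k]
    ring
  have hkj : k j = κ * Real.exp (-(∑ i, φ i * |θs i - θd j i|)) := rfl
  have : 2 * k j - κ ≤ k ⬝ᵥ u := by
    rw [hexpand] at hquad
    linarith
  calc krigVar q κ φ θd θs = κ - k ⬝ᵥ u := rfl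
    _ ≤ κ - (2 * k j - κ) := by linarith
    _ = 2 * κ * (1 - Real.exp (-(∑ i, φ i * |θs i - θd j i|))) := by
        rw [hkj]; ring

end Krig

lemma krigVar_bound2 {q : ℕ} {κ : ℝ} {φ : Fin q → ℝ} {p : ℕ} {θd : Fin p → Fin q → ℝ}
    (hκ : 0 < κ) (hφ : ∀ i, 0 < φ i)
    (hinj : Function.Injective θd) (θs : Fin q → ℝ) (j : Fin p) :
    krigVar q κ φ θd θs ≤ 2 * κ * ∑ i, φ i * |θs i - θd j i| := by
  refine (krigVar_bound hκ hφ hinj θs j).trans ?_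
  have h := Real.add_one_le_exp (-(∑ i, φ i * |θs i - θd j i|))
  have h2 : 1 - Real.exp (-(∑ i, φ i * |θs i - θd j i|))
      ≤ ∑ i, φ i * |θs i - θd j i| := by linarith
  have h2κ : (0:ℝ) ≤ 2 * κ := by linarith
  calc 2 * κ * (1 - Real.exp (-(∑ i, φ i * |θs i - θd j i|)))
      ≤ 2 * κ * ∑ i, φ i * |θs i - θd j i| := mul_le_mul_of_nonneg_left h2 h2κ
    _ = 2 * κ * ∑ i, φ i * |θs i - θd j i| := rfl

/-- the kriging variance of the (nugget-free) exponential-covariance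
Gaussian process vanishes at every design point; at any `θ*` it is bounded by
`2κ(1 - exp(-∑ᵢ φᵢ|θ*ᵢ - θⱼᵢ|)) ≤ 2κ ∑ᵢ φᵢ|θ*ᵢ - θⱼᵢ| ≤ 2κ(∑ᵢφᵢ)‖θ* - θⱼ‖_∞` for
every design point `θⱼ` (in particular the nearest one); and hence it converges to `0`
uniformly on a compact parameter set `Θ` as the fill distance of the design points
tends to zero. -/
theorem krigVar_zero_at_design_and_uniformly_small
    {q : ℕ} (κ : ℝ) (φ : Fin q → ℝ) (hκ : 0 < κ) (hφ : ∀ i, 0 < φ i)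
    {p : ℕ} (θd : Fin p → Fin q → ℝ) (hinj : Function.Injective θd)
    (Θset : Set (Fin q → ℝ)) (hΘ : IsCompact Θset) :
    (∀ j0 : Fin p, krigVar q κ φ θd (θd j0) = 0) ∧
      (∀ (θs : Fin q → ℝ) (j : Fin p),
        krigVar q κ φ θd θs
            ≤ 2 * κ * (1 - Real.exp (-(∑ i, φ i * |θs i - θd j i|))) ∧
          krigVar q κ φ θd θs ≤ 2 * κ * ∑ i, φ i * |θs i - θd j i| ∧
          krigVar q κ φ θd θs ≤ 2 * κ * (∑ i, φ i) * ⨆ i, |θs i - θd j i|) ∧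
      (∀ ε > (0 : ℝ), ∃ δ > (0 : ℝ),
        ∀ (p' : ℕ) (θd' : Fin p' → Fin q → ℝ), Function.Injective θd' →
          (∀ θ ∈ Θset, ∃ j, ∀ i, |θ i - θd' j i| < δ) →
          ∀ θ ∈ Θset, krigVar q κ φ θd' θ < ε) := by
  refine ⟨fun j0 => krigVar_design hκ hφ hinj j0, fun θs j => ?_, fun ε hε => ?_⟩
  · refine ⟨krigVar_bound hκ hφ hinj θs j, krigVar_bound2 hκ hφ hinj θs j,
      (krigVar_bound2 hκ hφ hinj θs j).trans ?_⟩
    have hS : ∀ i, |θs i - θd j i| ≤ ⨆ i, |θs i - θd j i| := fun i =>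
      le_ciSup ((Set.range fun i => |θs i - θd j i|).toFinite.bddAbove) i
    have hsum : (∑ i, φ i * |θs i - θd j i|)
        ≤ (∑ i, φ i) * ⨆ i, |θs i - θd j i| := by
      rw [Finset.sum_mul]
      apply Finset.sum_le_sum
      intro i _
      exact mul_le_mul_of_nonneg_left (hS i) (hφ i).le
    calc 2 * κ * ∑ i, φ i * |θs i - θd j i|
        ≤ 2 * κ * ((∑ i, φ i) * ⨆ i, |θs i - θd j i|) :=
          mul_le_mul_of_nonneg_left hsum (by linarith)
      _ = 2 * κ * (∑ i, φ i) * ⨆ i, |θs i - θd j i| := by ring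
  · set C : ℝ := 2 * κ * ∑ i, φ i with hCdef
    have hC0 : 0 ≤ C := by
      apply mul_nonneg (by linarith)
      exact Finset.sum_nonneg fun i _ => (hφ i).le
    refine ⟨ε / (C + 1), by positivity, ?_⟩
    intro p' θd' hinj' hfill θ hθ
    obtain ⟨j, hj⟩ := hfill θ hθ
    have hb := krigVar_bound2 hκ hφ hinj' θ j
    have hsum : (∑ i, φ i * |θ i - θd' j i|) ≤ (∑ i, φ i) * (ε / (C + 1)) := by
      rw [Finset.sum_mul]
      apply Finset.sum_le_sum
      intro i _
      exact mul_le_mul_of_nonneg_left (hj i).le (hφ i).le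
    have hfin : C * (ε / (C + 1)) < ε := by
      rw [mul_div_assoc', div_lt_iff₀ (by linarith)]
      nlinarith
    calc krigVar q κ φ θd' θ ≤ 2 * κ * ∑ i, φ i * |θ i - θd' j i| := hb
      _ ≤ 2 * κ * ((∑ i, φ i) * (ε / (C + 1))) :=
          mul_le_mul_of_nonneg_left hsum (by linarith)
      _ = C * (ε / (C + 1)) := by rw [hCdef]; ring
      _ < ε := hfin
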